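/- Let ψ : (0,∞) → (0,∞) be continuous, strictly decreasing with ψ(0+) = ∞, of the form ψ(r) = (v_d/r) ∫₀^r λ̄(z) dz for a measure λ on (0,∞) with ∫₀^1 z |log z| λ(dz) < ∞, where λ̄(z) = λ((z,∞)) and v_d > 0. Then ∫_{ψ(1)}^∞ ψ^{-1}(x) dx = v_d ∫₀^1 z |log z| λ(dz), and in particular this integral is finite. -/

import Mathlib

open MeasureTheory Filter

namespace PsiInvAux

open Set

lemma meas_L (lam : Measure ℝ) : Measurable (fun z : ℝ => lam (Set.Ioi z)) :=
  Antitone.measurable (fun _ _ h => measure_mono (Set.Ioi_subset_Ioi h))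

lemma fin_L (lam : Measure ℝ)
    (hmom1 : ∫⁻ z in Set.Ioi (0 : ℝ), ENNReal.ofReal z ∂lam ≠ ⊤) :
    ∀ z : ℝ, 0 < z → lam (Set.Ioi z) ≠ ⊤ := by
  intro z hz
  have h1 : ENNReal.ofReal z * lam (Set.Ioi z) = ∫⁻ x in Set.Ioi z, ENNReal.ofReal z ∂lam :=
    (setLIntegral_const _ _).symm
  have h2 : ∫⁻ x in Set.Ioi z, ENNReal.ofReal z ∂lam ≤ ∫⁻ x in Set.Ioi z, ENNReal.ofReal x ∂lam :=
    setLIntegral_mono' measurableSet_Ioi (fun x hx => ENNReal.ofReal_le_ofReal hx.le)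
  have h3 : ∫⁻ x in Set.Ioi z, ENNReal.ofReal x ∂lam
      ≤ ∫⁻ x in Set.Ioi (0:ℝ), ENNReal.ofReal x ∂lam :=
    lintegral_mono_set (Set.Ioi_subset_Ioi hz.le)
  intro htop
  have : ENNReal.ofReal z * lam (Set.Ioi z) = ⊤ := by
    rw [htop, ENNReal.mul_top (by simp [hz, ENNReal.ofReal_eq_zero, not_le])]
  rw [this] at h1
  have hle := h1.le.trans (h2.trans h3)
  exact hmom1 (top_le_iff.mp hle)

lemma sf (lam : Measure ℝ) (hfin : ∀ z : ℝ, 0 < z → lam (Set.Ioi z) ≠ ⊤) :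
    SigmaFinite (lam.restrict (Set.Ioi 0)) := by
  refine ⟨⟨⟨fun n => Set.Iic 0 ∪ Set.Ioi (1 / (n + 1) : ℝ), fun _ => trivial, ?_, ?_⟩⟩⟩
  · intro n
    rw [Measure.restrict_apply' measurableSet_Ioi]
    have hsub : (Set.Iic 0 ∪ Set.Ioi (1 / (n + 1) : ℝ)) ∩ Set.Ioi 0
        ⊆ Set.Ioi (1 / (n + 1) : ℝ) := by
      rintro x ⟨hx | hx, hx0⟩
      · exact absurd (Set.mem_Ioi.mp hx0) (not_lt.2 hx)
      · exact hx
    exact lt_of_le_of_lt (measure_mono hsub) (hfin _ (by positivity)).lt_top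
  · rw [Set.eq_univ_iff_forall]
    intro x
    rcases le_or_gt x 0 with h | h
    · exact Set.mem_iUnion.2 ⟨0, Or.inl h⟩
    · obtain ⟨n, hn⟩ := exists_nat_one_div_lt h
      exact Set.mem_iUnion.2 ⟨n, Or.inr hn⟩

lemma log_int (z : ℝ) (hz : 0 < z) (hz1 : z ≤ 1) :
    ∫⁻ t in Set.Ico z 1, ENNReal.ofReal t⁻¹ = ENNReal.ofReal (-Real.log z) := by
  have hcont : ContinuousOn (fun t : ℝ => t⁻¹) (Set.Icc z 1) :=
    continuousOn_id.inv₀ (fun t ht => ne_of_gt (lt_of_lt_of_le hz ht.1))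
  have hint : IntegrableOn (fun t : ℝ => t⁻¹) (Set.Ico z 1) :=
    (hcont.integrableOn_Icc).mono_set Set.Ico_subset_Icc_self
  have hnn : (0:ℝ→ℝ) ≤ᵐ[volume.restrict (Set.Ico z 1)] (fun t : ℝ => t⁻¹) := by
    filter_upwards [ae_restrict_mem measurableSet_Ico] with t ht
    exact inv_nonneg.2 (le_of_lt (lt_of_lt_of_le hz ht.1))
  rw [← ofReal_integral_eq_lintegral_ofReal hint hnn]
  congr 1
  rw [Measure.restrict_congr_set Ico_ae_eq_Ioc, ← intervalIntegral.integral_of_le hz1,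
    integral_inv (by rw [Set.uIcc_of_le hz1]; rintro ⟨h0, _⟩; exact absurd h0 (not_le.2 hz)),
    one_div, Real.log_inv]

lemma vol_inter (t w : ℝ) (ht : 0 < t) (hw : 0 < w) :
    volume (Set.Iic t ∩ Set.Ioo 0 w) = ENNReal.ofReal (min t w) := by
  rcases le_or_gt w t with h | h
  · have : Set.Iic t ∩ Set.Ioo 0 w = Set.Ioo 0 w := by
      apply Set.inter_eq_right.2
      intro x hx; exact le_trans hx.2.le h
    rw [this, Real.volume_Ioo, min_eq_right h, sub_zero]
  · have : Set.Iic t ∩ Set.Ioo 0 w = Set.Ioc 0 t := by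
      ext x
      constructor
      · rintro ⟨h1, h2, h3⟩; exact ⟨h2, h1⟩
      · rintro ⟨h1, h2⟩; exact ⟨h2, h1, lt_of_le_of_lt h2 h⟩
    rw [this, Real.volume_Ioc, min_eq_left h.le, sub_zero]

lemma J_int (w : ℝ) (hw : 0 < w) (hw1 : w ≤ 1) :
    ∫⁻ z in Set.Ioo 0 w, (∫⁻ t in Set.Ico z 1, ENNReal.ofReal t⁻¹)
      = ENNReal.ofReal (w + w * |Real.log w|) := by
  set H : ℝ × ℝ → ENNReal :=
    fun q => Set.indicator {q : ℝ × ℝ | q.1 ≤ q.2} (fun q => ENNReal.ofReal (q.2)⁻¹) q with hHdef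
  have hH : Measurable H :=
    Measurable.indicator (measurable_snd.inv.ennreal_ofReal)
      (measurableSet_le measurable_fst measurable_snd)
  have key : ∀ z ∈ Set.Ioo (0:ℝ) w, (∫⁻ t in Set.Ico z 1, ENNReal.ofReal t⁻¹)
      = ∫⁻ t in Set.Ioo (0:ℝ) 1, H (z, t) := by
    intro z hz
    have h1 : (fun t => H (z, t)) = (Set.Ici z).indicator (fun t => ENNReal.ofReal t⁻¹) := by
      ext t
      by_cases h : z ≤ t
      · simp [hHdef, Set.indicator_of_mem, h, Set.mem_Ici.2 h]
      · simp [hHdef, Set.indicator_of_notMem, h]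
    have hset : Set.Ici z ∩ Set.Ioo 0 1 = Set.Ico z 1 := by
      ext t
      constructor
      · rintro ⟨ha, hb, hc⟩; exact ⟨ha, hc⟩
      · rintro ⟨ha, hb⟩; exact ⟨ha, lt_of_lt_of_le hz.1 ha, hb⟩
    rw [h1, lintegral_indicator measurableSet_Ici, Measure.restrict_restrict measurableSet_Ici,
      hset]
  rw [setLIntegral_congr_fun measurableSet_Ioo key]
  rw [lintegral_lintegral_swap (hH.aemeasurable)]
  have key2 : ∀ t ∈ Set.Ioo (0:ℝ) 1, (∫⁻ z in Set.Ioo 0 w, H (z, t))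
      = ENNReal.ofReal t⁻¹ * ENNReal.ofReal (min t w) := by
    intro t ht
    have h1 : (fun z => H (z, t)) = (Set.Iic t).indicator (fun _ => ENNReal.ofReal t⁻¹) := by
      ext z
      by_cases h : z ≤ t
      · simp [hHdef, Set.indicator_of_mem, h, Set.mem_Iic.2 h]
      · simp [hHdef, Set.indicator_of_notMem, h]
    rw [h1, lintegral_indicator measurableSet_Iic, Measure.restrict_restrict measurableSet_Iic,
      setLIntegral_const, vol_inter t w ht.1 hw]
  rw [setLIntegral_congr_fun measurableSet_Ioo key2]
  have hsplit : Set.Ioo (0:ℝ) 1 = Set.Ioo 0 w ∪ Set.Ico w 1 := by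
    ext t
    constructor
    · rintro ⟨h1, h2⟩
      rcases lt_or_ge t w with h | h
      · exact Or.inl ⟨h1, h⟩
      · exact Or.inr ⟨h, h2⟩
    · rintro (⟨h1, h2⟩ | ⟨h1, h2⟩)
      · exact ⟨h1, lt_of_lt_of_le h2 hw1⟩
      · exact ⟨lt_of_lt_of_le hw h1, h2⟩
  rw [hsplit, lintegral_union measurableSet_Ico
    (by rw [Set.disjoint_left]; rintro t ⟨_, h2⟩ ⟨h3, _⟩; exact absurd h2 (not_lt.2 h3))]
  have part1 : ∫⁻ t in Set.Ioo (0:ℝ) w, ENNReal.ofReal t⁻¹ * ENNReal.ofReal (min t w)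
      = ENNReal.ofReal w := by
    have h : ∀ t ∈ Set.Ioo (0:ℝ) w, ENNReal.ofReal t⁻¹ * ENNReal.ofReal (min t w) = 1 := by
      intro t ht
      rw [min_eq_left ht.2.le, ← ENNReal.ofReal_mul (inv_nonneg.2 ht.1.le),
        inv_mul_cancel₀ (ne_of_gt ht.1), ENNReal.ofReal_one]
    rw [setLIntegral_congr_fun measurableSet_Ioo h, setLIntegral_const,
      Real.volume_Ioo, one_mul, sub_zero]
  have part2 : ∫⁻ t in Set.Ico w 1, ENNReal.ofReal t⁻¹ * ENNReal.ofReal (min t w)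
      = ENNReal.ofReal (w * |Real.log w|) := by
    have h : ∀ t ∈ Set.Ico w 1, ENNReal.ofReal t⁻¹ * ENNReal.ofReal (min t w)
        = ENNReal.ofReal w * ENNReal.ofReal t⁻¹ := by
      intro t ht
      rw [min_eq_right ht.1, mul_comm]
    rw [setLIntegral_congr_fun measurableSet_Ico h,
      lintegral_const_mul' _ _ ENNReal.ofReal_ne_top, log_int w hw hw1,
      ← ENNReal.ofReal_mul hw.le]
    congr 1
    rw [abs_of_nonpos (Real.log_nonpos hw.le hw1)]
  rw [part1, part2, ← ENNReal.ofReal_add hw.le (by positivity)]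

lemma swap_nu (lam : Measure ℝ) (hsf : SigmaFinite (lam.restrict (Set.Ioi 0)))
    (f : ℝ → ENNReal) (hf : Measurable f) :
    ∫⁻ z in Set.Ioo (0:ℝ) 1, lam (Set.Ioi z) * f z
      = ∫⁻ w in Set.Ioi (0:ℝ), (∫⁻ z in Set.Ioo 0 (min w 1), f z) ∂lam := by
  set K : ℝ × ℝ → ENNReal :=
    fun q => Set.indicator {q : ℝ × ℝ | q.1 < q.2} (fun q => f q.1) q with hKdef
  have hK : Measurable K :=
    Measurable.indicator (hf.comp measurable_fst)
      (measurableSet_lt measurable_fst measurable_snd)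
  have key : ∀ z ∈ Set.Ioo (0:ℝ) 1, lam (Set.Ioi z) * f z
      = ∫⁻ w in Set.Ioi (0:ℝ), K (z, w) ∂lam := by
    intro z hz
    have h1 : (fun w => K (z, w)) = (Set.Ioi z).indicator (fun _ => f z) := by
      ext w
      by_cases h : z < w
      · simp [hKdef, Set.indicator_of_mem, h, Set.mem_Ioi.2 h]
      · simp [hKdef, Set.indicator_of_notMem, h]
    have hset : Set.Ioi z ∩ Set.Ioi (0:ℝ) = Set.Ioi z :=
      Set.inter_eq_left.2 (Set.Ioi_subset_Ioi hz.1.le)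
    rw [h1, lintegral_indicator measurableSet_Ioi, Measure.restrict_restrict measurableSet_Ioi,
      hset, setLIntegral_const, mul_comm]
  rw [setLIntegral_congr_fun measurableSet_Ioo key]
  rw [lintegral_lintegral_swap (hK.aemeasurable)]
  refine setLIntegral_congr_fun measurableSet_Ioi ?_
  intro w hw
  beta_reduce
  have h1 : (fun z => K (z, w)) = (Set.Iio w).indicator f := by
    ext z
    by_cases h : z < w
    · simp [hKdef, Set.indicator_of_mem, h, Set.mem_Iio.2 h]
    · simp [hKdef, Set.indicator_of_notMem, h]
  have hset : Set.Iio w ∩ Set.Ioo (0:ℝ) 1 = Set.Ioo 0 (min w 1) := by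
    ext z
    constructor
    · rintro ⟨ha, hb, hc⟩; exact ⟨hb, lt_min ha hc⟩
    · rintro ⟨ha, hb⟩; exact ⟨lt_of_lt_of_le hb (min_le_left _ _), ha,
        lt_of_lt_of_le hb (min_le_right _ _)⟩
  rw [h1, lintegral_indicator measurableSet_Iio, Measure.restrict_restrict measurableSet_Iio,
    hset]

lemma split_Ioi (lam : Measure ℝ) (g : ℝ → ENNReal) :
    ∫⁻ w in Set.Ioi (0:ℝ), g w ∂lam
      = (∫⁻ w in Set.Ioc (0:ℝ) 1, g w ∂lam) + ∫⁻ w in Set.Ioi (1:ℝ), g w ∂lam := by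
  rw [← Set.Ioc_union_Ioi_eq_Ioi (zero_le_one (α := ℝ)),
    lintegral_union measurableSet_Ioi
      (by rw [Set.disjoint_left]; rintro x ⟨_, h2⟩ h3; exact absurd (Set.mem_Ioi.mp h3) (not_lt.2 h2))]

lemma swap_tz (lam : Measure ℝ) (hfin : ∀ z : ℝ, 0 < z → lam (Set.Ioi z) ≠ ⊤) :
    ∫⁻ t in Set.Ioo (0:ℝ) 1, ENNReal.ofReal t⁻¹ * (∫⁻ z in Set.Ioc 0 t, lam (Set.Ioi z))
      = ∫⁻ z in Set.Ioo (0:ℝ) 1, lam (Set.Ioi z) * (∫⁻ t in Set.Ico z 1, ENNReal.ofReal t⁻¹) := by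
  set H : ℝ × ℝ → ENNReal :=
    fun q => Set.indicator {q : ℝ × ℝ | q.2 ≤ q.1}
      (fun q => ENNReal.ofReal (q.1)⁻¹ * lam (Set.Ioi q.2)) q with hHdef
  have hH : Measurable H :=
    Measurable.indicator
      ((measurable_fst.inv.ennreal_ofReal).mul ((meas_L lam).comp measurable_snd))
      (measurableSet_le measurable_snd measurable_fst)
  have key : ∀ t ∈ Set.Ioo (0:ℝ) 1,
      ENNReal.ofReal t⁻¹ * (∫⁻ z in Set.Ioc 0 t, lam (Set.Ioi z))
        = ∫⁻ z in Set.Ioo (0:ℝ) 1, H (t, z) := by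
    intro t ht
    have h1 : (fun z => H (t, z))
        = (Set.Iic t).indicator (fun z => ENNReal.ofReal t⁻¹ * lam (Set.Ioi z)) := by
      ext z
      by_cases h : z ≤ t
      · simp [hHdef, Set.indicator_of_mem, h, Set.mem_Iic.2 h]
      · simp [hHdef, Set.indicator_of_notMem, h]
    have hset : Set.Iic t ∩ Set.Ioo 0 1 = Set.Ioc 0 t := by
      ext z
      constructor
      · rintro ⟨ha, hb, hc⟩; exact ⟨hb, ha⟩
      · rintro ⟨ha, hb⟩; exact ⟨hb, ha, lt_of_le_of_lt hb ht.2⟩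
    rw [h1, lintegral_indicator measurableSet_Iic, Measure.restrict_restrict measurableSet_Iic,
      hset, lintegral_const_mul' _ _ ENNReal.ofReal_ne_top]
  rw [setLIntegral_congr_fun measurableSet_Ioo key,
    lintegral_lintegral_swap (hH.aemeasurable)]
  refine setLIntegral_congr_fun measurableSet_Ioo ?_
  intro z hz
  beta_reduce
  have h1 : (fun t => H (t, z))
      = (Set.Ici z).indicator (fun t => ENNReal.ofReal t⁻¹ * lam (Set.Ioi z)) := by
    ext t
    by_cases h : z ≤ t
    · simp [hHdef, Set.indicator_of_mem, h, Set.mem_Ici.2 h]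
    · simp [hHdef, Set.indicator_of_notMem, h]
  have hset : Set.Ici z ∩ Set.Ioo 0 1 = Set.Ico z 1 := by
    ext t
    constructor
    · rintro ⟨ha, hb, hc⟩; exact ⟨ha, hc⟩
    · rintro ⟨ha, hb⟩; exact ⟨ha, lt_of_lt_of_le hz.1 ha, hb⟩
  rw [h1, lintegral_indicator measurableSet_Ici, Measure.restrict_restrict measurableSet_Ici,
    hset, lintegral_mul_const' _ _ (hfin z hz.1), mul_comm]

end PsiInvAux

open PsiInvAux

theorem integral_of_inverse_psi (vd : ℝ) (hvd : 0 < vd) (lam : Measure ℝ)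
    (hsupp : lam (Set.Iic 0) = 0) (hinf : lam (Set.Ioi 0) = ⊤)
    (hmom1 : ∫⁻ z in Set.Ioi (0 : ℝ), ENNReal.ofReal z ∂lam ≠ ⊤)
    (hmomlog : ∫⁻ z in Set.Ioc (0 : ℝ) 1,
        ENNReal.ofReal (z * |Real.log z|) ∂lam ≠ ⊤)
    (ψ ψinv : ℝ → ℝ)
    (hψ : ∀ r > (0 : ℝ),
        ψ r = (vd / r) * ∫ z in Set.Ioc (0 : ℝ) r, (lam (Set.Ioi z)).toReal)
    (hcont : ContinuousOn ψ (Set.Ioi 0))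
    (hanti : StrictAntiOn ψ (Set.Ioi 0))
    (hlim : Tendsto ψ (nhdsWithin 0 (Set.Ioi 0)) atTop)
    (hinv : ∀ r > (0 : ℝ), ψinv (ψ r) = r) :
    ∫⁻ x in Set.Ioi (ψ 1), ENNReal.ofReal (ψinv x)
      = ENNReal.ofReal vd
          * ∫⁻ z in Set.Ioc (0 : ℝ) 1, ENNReal.ofReal (z * |Real.log z|) ∂lam := by
  have hfin := fin_L lam hmom1
  have hsf := sf lam hfin
  set I1 : ENNReal := ∫⁻ w in Set.Ioc (0:ℝ) 1, ENNReal.ofReal w ∂lam with hI1def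
  set IL : ENNReal := ∫⁻ z in Set.Ioc (0:ℝ) 1, ENNReal.ofReal (z * |Real.log z|) ∂lam with hILdef
  set c : ENNReal := lam (Set.Ioi 1) with hcdef
  have hI1 : I1 ≠ ⊤ := by
    refine ne_top_of_le_ne_top hmom1 ?_
    exact lintegral_mono_set Set.Ioc_subset_Ioi_self
  have hc : c ≠ ⊤ := hfin 1 one_pos
  -- B' : ∫⁻ z in Ioo 0 1, lam (Ioi z) = I1 + c
  have hBp : ∫⁻ z in Set.Ioo (0:ℝ) 1, lam (Set.Ioi z) = I1 + c := by
    have h0 : ∫⁻ z in Set.Ioo (0:ℝ) 1, lam (Set.Ioi z)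
        = ∫⁻ z in Set.Ioo (0:ℝ) 1, lam (Set.Ioi z) * 1 := by simp
    rw [h0, swap_nu lam hsf _ measurable_const, split_Ioi]
    congr 1
    · refine setLIntegral_congr_fun measurableSet_Ioc ?_
      intro w hw
      beta_reduce
      rw [setLIntegral_one, Real.volume_Ioo, min_eq_left hw.2, sub_zero]
    · have key : ∀ w ∈ Set.Ioi (1:ℝ),
          (∫⁻ z in Set.Ioo 0 (min w 1), (1:ENNReal)) = (1:ENNReal) := by
        intro w hw
        rw [setLIntegral_one, Real.volume_Ioo, min_eq_right (Set.mem_Ioi.mp hw).le, sub_zero,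
          ENNReal.ofReal_one]
      rw [setLIntegral_congr_fun measurableSet_Ioi key, setLIntegral_const, one_mul]
  -- A' : with the log weight
  have hf2 : Measurable (fun z : ℝ => ∫⁻ t in Set.Ico z 1, ENNReal.ofReal t⁻¹) := by
    apply Antitone.measurable
    intro a b hab
    exact lintegral_mono_set (fun x hx => ⟨hab.trans hx.1, hx.2⟩)
  have hAp : ∫⁻ z in Set.Ioo (0:ℝ) 1,
      lam (Set.Ioi z) * (∫⁻ t in Set.Ico z 1, ENNReal.ofReal t⁻¹) = (IL + I1) + c := by
    rw [swap_nu lam hsf _ hf2, split_Ioi]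
    congr 1
    · have key : ∀ w ∈ Set.Ioc (0:ℝ) 1,
          (∫⁻ z in Set.Ioo 0 (min w 1), ∫⁻ t in Set.Ico z 1, ENNReal.ofReal t⁻¹)
            = ENNReal.ofReal (w * |Real.log w|) + ENNReal.ofReal w := by
        intro w hw
        rw [min_eq_left hw.2, J_int w hw.1 hw.2, ENNReal.ofReal_add hw.1.le (mul_nonneg hw.1.le (abs_nonneg _)),
          add_comm]
      rw [setLIntegral_congr_fun measurableSet_Ioc key,
        lintegral_add_left (Measurable.ennreal_ofReal (f := fun x : ℝ => x * |Real.log x|) (measurable_id'.mul Real.measurable_log.abs))]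
    · have key : ∀ w ∈ Set.Ioi (1:ℝ),
          (∫⁻ z in Set.Ioo 0 (min w 1), ∫⁻ t in Set.Ico z 1, ENNReal.ofReal t⁻¹)
            = (1 : ENNReal) := by
        intro w hw
        rw [min_eq_right (Set.mem_Ioi.mp hw).le, J_int 1 one_pos le_rfl]
        simp
      rw [setLIntegral_congr_fun measurableSet_Ioi key, setLIntegral_const, one_mul]
  -- finiteness of partial integrals of L
  have hIoc_eq : ∫⁻ z in Set.Ioc (0:ℝ) 1, lam (Set.Ioi z)
      = ∫⁻ z in Set.Ioo (0:ℝ) 1, lam (Set.Ioi z) := by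
    rw [← Measure.restrict_congr_set Ioo_ae_eq_Ioc]
  have hfinint : ∀ t : ℝ, ∫⁻ z in Set.Ioc (0:ℝ) t, lam (Set.Ioi z) ≠ ⊤ := by
    intro t
    have hsub : Set.Ioc (0:ℝ) t ⊆ Set.Ioc (0:ℝ) (max t 1) :=
      Set.Ioc_subset_Ioc le_rfl (le_max_left t 1)
    refine ne_top_of_le_ne_top ?_ (lintegral_mono_set hsub)
    have hunion : Set.Ioc (0:ℝ) 1 ∪ Set.Ioc (1:ℝ) (max t 1) = Set.Ioc (0:ℝ) (max t 1) :=
      Set.Ioc_union_Ioc_eq_Ioc zero_le_one (le_max_right t 1)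
    rw [← hunion, lintegral_union measurableSet_Ioc
      (by rw [Set.disjoint_left]; rintro x ⟨_, h2⟩ ⟨h3, _⟩; exact absurd h3 (not_lt.2 h2))]
    refine ENNReal.add_ne_top.2 ⟨?_, ?_⟩
    · rw [hIoc_eq, hBp]; exact ENNReal.add_ne_top.2 ⟨hI1, hc⟩
    · have hle : ∫⁻ z in Set.Ioc (1:ℝ) (max t 1), lam (Set.Ioi z)
          ≤ ∫⁻ z in Set.Ioc (1:ℝ) (max t 1), lam (Set.Ioi 1) :=
        setLIntegral_mono' measurableSet_Ioc
          (fun z hz => measure_mono (Set.Ioi_subset_Ioi hz.1.le))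
      refine ne_top_of_le_ne_top ?_ hle
      rw [setLIntegral_const]
      exact ENNReal.mul_ne_top hc (by simp [Real.volume_Ioc])
  have hOFI : ∀ t : ℝ, 0 < t →
      ENNReal.ofReal (∫ z in Set.Ioc (0:ℝ) t, (lam (Set.Ioi z)).toReal)
        = ∫⁻ z in Set.Ioc (0:ℝ) t, lam (Set.Ioi z) := by
    intro t ht
    rw [ofReal_integral_eq_lintegral_ofReal
      (integrable_toReal_of_lintegral_ne_top ((meas_L lam).aemeasurable) (hfinint t))
      (ae_of_all _ (fun z => ENNReal.toReal_nonneg))]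
    refine setLIntegral_congr_fun measurableSet_Ioc ?_
    intro z hz
    beta_reduce
    rw [ENNReal.ofReal_toReal (hfin z hz.1)]
  have hψ1 : ψ 1 = vd * ∫ z in Set.Ioc (0:ℝ) 1, (lam (Set.Ioi z)).toReal := by
    rw [hψ 1 one_pos, div_one]
  have hψ1nn : 0 ≤ ψ 1 := by
    rw [hψ1]
    exact mul_nonneg hvd.le (integral_nonneg (fun z => ENNReal.toReal_nonneg))
  have hB : ENNReal.ofReal (ψ 1) = ENNReal.ofReal vd * (I1 + c) := by
    rw [hψ1, ENNReal.ofReal_mul hvd.le, hOFI 1 one_pos, hIoc_eq, hBp]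
  have hmono : Monotone (fun t : ℝ => ∫ z in Set.Ioc (0:ℝ) t, (lam (Set.Ioi z)).toReal) := by
    intro a b hab
    exact setIntegral_mono_set
      (integrable_toReal_of_lintegral_ne_top ((meas_L lam).aemeasurable) (hfinint b))
      (ae_of_all _ (fun z => ENNReal.toReal_nonneg))
      (HasSubset.Subset.eventuallyLE (Set.Ioc_subset_Ioc le_rfl hab))
  set F : ℝ → ℝ := fun t => (vd / t) * ∫ z in Set.Ioc (0:ℝ) t, (lam (Set.Ioi z)).toReal
    with hFdef
  have hFmeas : Measurable F := (measurable_const.div measurable_id).mul hmono.measurable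
  have hFψ : ∀ t : ℝ, 0 < t → F t = ψ t := fun t ht => (hψ t ht).symm
  -- A value
  have hA : ∫⁻ t in Set.Ioo (0:ℝ) 1, ENNReal.ofReal (ψ t)
      = ENNReal.ofReal vd * ((IL + I1) + c) := by
    have key : ∀ t ∈ Set.Ioo (0:ℝ) 1, ENNReal.ofReal (ψ t)
        = ENNReal.ofReal vd
            * (ENNReal.ofReal t⁻¹ * ∫⁻ z in Set.Ioc (0:ℝ) t, lam (Set.Ioi z)) := by
      intro t ht
      have h1 : ψ t = vd * (t⁻¹ * ∫ z in Set.Ioc (0:ℝ) t, (lam (Set.Ioi z)).toReal) := by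
        rw [hψ t ht.1]; ring
      rw [h1, ENNReal.ofReal_mul hvd.le, ENNReal.ofReal_mul (inv_nonneg.2 ht.1.le),
        hOFI t ht.1]
    rw [setLIntegral_congr_fun measurableSet_Ioo key,
      lintegral_const_mul' _ _ ENNReal.ofReal_ne_top, swap_tz lam hfin, hAp]
  -- step 2 : subtraction
  have hstep2 : ∫⁻ t in Set.Ioo (0:ℝ) 1, ENNReal.ofReal (ψ t - ψ 1)
      = (∫⁻ t in Set.Ioo (0:ℝ) 1, ENNReal.ofReal (ψ t)) - ENNReal.ofReal (ψ 1) := by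
    have hpt : ∀ t : ℝ, ENNReal.ofReal (ψ t - ψ 1)
        = ENNReal.ofReal (ψ t) - ENNReal.ofReal (ψ 1) :=
      fun t => ENNReal.ofReal_sub _ hψ1nn
    rw [lintegral_congr (fun t => hpt t)]
    have hle : (fun _ : ℝ => ENNReal.ofReal (ψ 1)) ≤ᵐ[volume.restrict (Set.Ioo (0:ℝ) 1)]
        (fun t => ENNReal.ofReal (ψ t)) := by
      filter_upwards [ae_restrict_mem measurableSet_Ioo] with t ht
      exact ENNReal.ofReal_le_ofReal
        (hanti (Set.mem_Ioi.2 ht.1) (Set.mem_Ioi.2 one_pos) ht.2).le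
    rw [lintegral_sub measurable_const
      (by rw [setLIntegral_const]
          exact ENNReal.mul_ne_top ENNReal.ofReal_ne_top (by simp [Real.volume_Ioo])) hle]
    congr 1
    rw [setLIntegral_const, Real.volume_Ioo, sub_zero, ENNReal.ofReal_one, mul_one]
  -- step 1 : layer cake via product measure
  have hsurj : ∀ x : ℝ, ψ 1 < x → ∃ r ∈ Set.Ioo (0:ℝ) 1, ψ r = x := by
    intro x hx
    have hev : ∀ᶠ r in nhdsWithin 0 (Set.Ioi 0), x < ψ r := hlim.eventually_gt_atTop x
    rw [eventually_nhdsWithin_iff, Metric.eventually_nhds_iff] at hev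
    obtain ⟨ε, hε, hball⟩ := hev
    have hδ0 : 0 < min (ε/2) (1/2) := by positivity
    have hδ1 : min (ε/2) (1/2) < 1 := lt_of_le_of_lt (min_le_right _ _) (by norm_num)
    have hδε : dist (min (ε/2) (1/2)) 0 < ε := by
      rw [Real.dist_eq, sub_zero, abs_of_pos hδ0]
      exact lt_of_le_of_lt (min_le_left _ _) (by linarith)
    have hxδ : x < ψ (min (ε/2) (1/2)) := hball hδε (Set.mem_Ioi.2 hδ0)
    have hsub : Set.Icc (min (ε/2) (1/2)) 1 ⊆ Set.Ioi (0:ℝ) :=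
      fun y hy => lt_of_lt_of_le hδ0 hy.1
    obtain ⟨r, hr, hrx⟩ := intermediate_value_Ioo' hδ1.le (hcont.mono hsub) ⟨hx, hxδ⟩
    exact ⟨r, ⟨lt_trans hδ0 hr.1, hr.2⟩, hrx⟩
  set S : Set (ℝ × ℝ) := {p | p.2 ∈ Set.Ioo (0:ℝ) 1 ∧ ψ 1 < p.1 ∧ p.1 < F p.2} with hSdef
  have hSm : MeasurableSet S := by
    have hS2 : S = {p : ℝ × ℝ | p.2 ∈ Set.Ioo (0:ℝ) 1}
        ∩ ({p | ψ 1 < p.1} ∩ {p | p.1 < F p.2}) := by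
      ext p; simp only [hSdef, Set.mem_setOf_eq, Set.mem_inter_iff]
    rw [hS2]
    exact (measurable_snd measurableSet_Ioo).inter
      ((measurableSet_lt measurable_const measurable_fst).inter
        (measurableSet_lt measurable_fst (hFmeas.comp measurable_snd)))
  have hx_sect : ∀ x : ℝ, volume (Prod.mk x ⁻¹' S)
      = (Set.Ioi (ψ 1)).indicator (fun x => ENNReal.ofReal (ψinv x)) x := by
    intro x
    by_cases hx : ψ 1 < x
    · obtain ⟨r, hr, hrx⟩ := hsurj x hx
      have hrinv : ψinv x = r := by rw [← hrx, hinv r hr.1]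
      have hsect : Prod.mk x ⁻¹' S = Set.Ioo 0 r := by
        ext t
        simp only [hSdef, Set.mem_preimage, Set.mem_setOf_eq, Set.mem_Ioo]
        constructor
        · rintro ⟨⟨ht0, ht1⟩, _, hxF⟩
          refine ⟨ht0, ?_⟩
          by_contra hcon
          push_neg at hcon
          have hψle : ψ t ≤ ψ r := by
            rcases eq_or_lt_of_le hcon with h | h
            · rw [h]
            · exact (hanti (Set.mem_Ioi.2 hr.1) (Set.mem_Ioi.2 ht0) h).le
          rw [hFψ t ht0] at hxF
          exact absurd hxF (not_lt.2 (by rw [hrx] at hψle; linarith))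
        · rintro ⟨ht0, htr⟩
          have ht1 : t < 1 := htr.trans hr.2
          have hψt : x < ψ t := by
            rw [← hrx]
            exact hanti (Set.mem_Ioi.2 ht0) (Set.mem_Ioi.2 hr.1) htr
          refine ⟨⟨ht0, ht1⟩, hx, ?_⟩
          rw [hFψ t ht0]
          exact hψt
      rw [hsect, Real.volume_Ioo, sub_zero, Set.indicator_of_mem (Set.mem_Ioi.2 hx), hrinv]
    · have hsect : Prod.mk x ⁻¹' S = ∅ := by
        ext t
        simp only [hSdef, Set.mem_preimage, Set.mem_setOf_eq, Set.mem_empty_iff_false,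
          iff_false]
        rintro ⟨_, h2, _⟩
        exact hx h2
      rw [hsect, measure_empty, Set.indicator_of_notMem (by simpa using hx)]
  have ht_sect : ∀ t : ℝ, volume ((fun x => (x, t)) ⁻¹' S)
      = (Set.Ioo (0:ℝ) 1).indicator (fun t => ENNReal.ofReal (ψ t - ψ 1)) t := by
    intro t
    by_cases ht : t ∈ Set.Ioo (0:ℝ) 1
    · have hsect : (fun x => (x, t)) ⁻¹' S = Set.Ioo (ψ 1) (F t) := by
        ext x
        simp only [hSdef, Set.mem_preimage, Set.mem_setOf_eq, Set.mem_Ioo]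
        constructor
        · rintro ⟨_, h2, h3⟩; exact ⟨h2, h3⟩
        · rintro ⟨h2, h3⟩; exact ⟨ht, h2, h3⟩
      rw [hsect, hFψ t ht.1, Real.volume_Ioo, Set.indicator_of_mem ht]
    · have hsect : (fun x => (x, t)) ⁻¹' S = ∅ := by
        ext x
        simp only [hSdef, Set.mem_preimage, Set.mem_setOf_eq, Set.mem_empty_iff_false,
          iff_false]
        rintro ⟨h1, _, _⟩
        exact ht h1
      rw [hsect, measure_empty, Set.indicator_of_notMem ht]
  have hLHS : ∫⁻ x in Set.Ioi (ψ 1), ENNReal.ofReal (ψinv x) = (volume.prod volume) S := by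
    rw [Measure.prod_apply hSm, lintegral_congr hx_sect,
      lintegral_indicator measurableSet_Ioi]
  have hRHS : (volume.prod volume) S
      = ∫⁻ t in Set.Ioo (0:ℝ) 1, ENNReal.ofReal (ψ t - ψ 1) := by
    rw [Measure.prod_apply_symm hSm, lintegral_congr ht_sect,
      lintegral_indicator measurableSet_Ioo]
  rw [hLHS, hRHS, hstep2, hA, hB]
  have hsplitmul : ENNReal.ofReal vd * ((IL + I1) + c)
      = ENNReal.ofReal vd * IL + ENNReal.ofReal vd * (I1 + c) := by
    rw [add_assoc, mul_add]
  rw [hsplitmul, ENNReal.add_sub_cancel_right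
    (ENNReal.mul_ne_top ENNReal.ofReal_ne_top (ENNReal.add_ne_top.2 ⟨hI1, hc⟩))]
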